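/- Let S be any finite generating set of SL(3,ℤ), and let g = e₁₂ be the elementary matrix with ones on the diagonal, (1,2)-entry equal to 1, and all other entries 0. Then for every nonzero integer k, every nonprincipal ultrafilter ω on ℕ, and every unbounded nondecreasing sequence (d_n) of positive real numbers, the element g^k does not lie in the kernel of the natural action of SL(3,ℤ) on the asymptotic cone Cone_ω(SL(3,ℤ),d_n): there exists a sequence (x_n) in SL(3,ℤ) with (‖x_n‖_S/d_n) bounded such that ‖x_n⁻¹ g^k x_n‖_S / d_n does not converge to 0 along ω. In particular, this kernel is not a finite-index subgroup of SL(3,ℤ). -/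

import Mathlib

open Filter

/-- The word length of `g` with respect to a generating set `S`. -/
noncomputable def wordLength {G : Type*} [Group G] (S : Set G) (g : G) : ℕ :=
  sInf {n | ∃ l : List G, (∀ x ∈ l, x ∈ S ∨ x⁻¹ ∈ S) ∧ l.length = n ∧ l.prod = g}

/-- `g` lies in the kernel of the natural action of `G` on the asymptotic cone
`Cone_ω(G, d_n)`. -/
def inConeKernel {G : Type*} [Group G] (S : Set G) (ω : Ultrafilter ℕ) (d : ℕ → ℝ)
    (g : G) : Prop :=
  ∀ x : ℕ → G, (∃ B : ℝ, ∀ n, (wordLength S (x n) : ℝ) / d n ≤ B) →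
    Tendsto (fun n => (wordLength S ((x n)⁻¹ * g * x n) : ℝ) / d n) (ω : Filter ℕ) (nhds 0)

abbrev SL3 : Type := Matrix.SpecialLinearGroup (Fin 3) ℤ

/-- The elementary matrix `e₁₂` in `SL(3,ℤ)`. -/
def e12 : SL3 :=
  ⟨!![1, 1, 0; 0, 1, 0; 0, 0, 1], by first | (rw [Matrix.det_fin_three]; rfl) | decide | norm_num [Matrix.det_fin_three, Matrix.vecHead, Matrix.vecTail]⟩

/- ### Auxiliary lemmas on word length -/

lemma wordLength_le {G : Type*} [Group G] (S : Set G) (g : G) (l : List G)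
    (hl : ∀ x ∈ l, x ∈ S ∨ x⁻¹ ∈ S) (hp : l.prod = g) : wordLength S g ≤ l.length :=
  Nat.sInf_le ⟨l, hl, rfl, hp⟩

lemma wordLength_exists {G : Type*} [Group G] {S : Set G} (hSgen : Subgroup.closure S = ⊤)
    (g : G) :
    ∃ l : List G, (∀ x ∈ l, x ∈ S ∨ x⁻¹ ∈ S) ∧ l.length = wordLength S g ∧ l.prod = g := by
  have hg : g ∈ (Subgroup.closure S).toSubmonoid := by rw [hSgen]; trivial
  rw [Subgroup.closure_toSubmonoid] at hg
  obtain ⟨l, hl, hprod⟩ := Submonoid.exists_list_of_mem_closure hg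
  have hne : {n | ∃ l : List G, (∀ x ∈ l, x ∈ S ∨ x⁻¹ ∈ S) ∧ l.length = n ∧ l.prod = g}.Nonempty := by
    refine ⟨l.length, l, fun x hx => ?_, rfl, hprod⟩
    rcases hl x hx with h | h
    · exact Or.inl h
    · exact Or.inr (Set.mem_inv.mp h)
  exact Nat.sInf_mem hne

lemma wordLength_mul_le {G : Type*} [Group G] {S : Set G} (hSgen : Subgroup.closure S = ⊤)
    (g h : G) : wordLength S (g * h) ≤ wordLength S g + wordLength S h := by
  obtain ⟨lg, hlg, hlgl, hlgp⟩ := wordLength_exists hSgen g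
  obtain ⟨lh, hlh, hlhl, hlhp⟩ := wordLength_exists hSgen h
  have := wordLength_le S (g * h) (lg ++ lh)
    (fun x hx => by rcases List.mem_append.mp hx with h' | h'; exacts [hlg x h', hlh x h'])
    (by rw [List.prod_append, hlgp, hlhp])
  simpa [List.length_append, hlgl, hlhl] using this

lemma wordLength_pow_le {G : Type*} [Group G] {S : Set G} (hSgen : Subgroup.closure S = ⊤)
    (g : G) (t : ℕ) : wordLength S (g ^ t) ≤ t * wordLength S g := by
  induction t with
  | zero => exact le_trans (wordLength_le S (g ^ 0) [] (by simp) (by simp)) (by simp)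
  | succ n ih =>
    calc wordLength S (g ^ (n + 1)) = wordLength S (g ^ n * g) := by rw [pow_succ]
      _ ≤ wordLength S (g ^ n) + wordLength S g := wordLength_mul_le hSgen _ _
      _ ≤ n * wordLength S g + wordLength S g := by omega
      _ = (n + 1) * wordLength S g := by ring

/- ### Entry bounds for products -/

noncomputable def entN (s : SL3) : ℕ :=
  Finset.univ.sup (fun p : Fin 3 × Fin 3 => ((s : Matrix (Fin 3) (Fin 3) ℤ) p.1 p.2).natAbs)

lemma entN_le (s : SL3) (i j : Fin 3) :
    ((s : Matrix (Fin 3) (Fin 3) ℤ) i j).natAbs ≤ entN s :=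
  Finset.le_sup (f := fun p : Fin 3 × Fin 3 =>
    ((s : Matrix (Fin 3) (Fin 3) ℤ) p.1 p.2).natAbs) (Finset.mem_univ (i, j))

lemma entries_bound (S : Set SL3) (hSfin : S.Finite) :
    ∃ K : ℕ, 2 ≤ K ∧ ∀ l : List SL3, (∀ x ∈ l, x ∈ S ∨ x⁻¹ ∈ S) →
      ∀ i j, ((l.prod : Matrix (Fin 3) (Fin 3) ℤ) i j).natAbs ≤ K ^ l.length := by
  classical
  obtain ⟨C, hmem⟩ : ∃ C : ℕ, ∀ x : SL3, (x ∈ S ∨ x⁻¹ ∈ S) → ∀ i j,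
      ((x : Matrix (Fin 3) (Fin 3) ℤ) i j).natAbs ≤ C := by
    refine ⟨hSfin.toFinset.sup (fun s => max (entN s) (entN s⁻¹)), ?_⟩
    intro x hx i j
    rcases hx with h | h
    · exact le_trans (le_trans (entN_le x i j) (le_max_left _ _))
        (Finset.le_sup (f := fun s => max (entN s) (entN s⁻¹)) (hSfin.mem_toFinset.mpr h))
    · have h2 : entN x ≤ max (entN x⁻¹) (entN (x⁻¹)⁻¹) := by rw [inv_inv]; exact le_max_right _ _
      exact le_trans (le_trans (entN_le x i j) h2)
        (Finset.le_sup (f := fun s => max (entN s) (entN s⁻¹)) (hSfin.mem_toFinset.mpr h))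
  refine ⟨3 * (C + 1), by omega, ?_⟩
  intro l
  induction l with
  | nil =>
    intro _ i j
    simp only [List.prod_nil, List.length_nil, pow_zero, Matrix.SpecialLinearGroup.coe_one]
    rcases eq_or_ne i j with h | h <;> simp [Matrix.one_apply, h]
  | cons x t ih =>
    intro hl i j
    have hx := hmem x (hl x List.mem_cons_self)
    have ht := ih (fun y hy => hl y (List.mem_cons_of_mem x hy))
    set P : Matrix (Fin 3) (Fin 3) ℤ := (t.prod : Matrix (Fin 3) (Fin 3) ℤ) with hP
    set xm : Matrix (Fin 3) (Fin 3) ℤ := (x : Matrix (Fin 3) (Fin 3) ℤ) with hxm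
    have hcoe : ((x :: t).prod : Matrix (Fin 3) (Fin 3) ℤ) = xm * P := by
      rw [List.prod_cons, Matrix.SpecialLinearGroup.coe_mul]
    rw [hcoe]
    have hentry : (xm * P) i j = xm i 0 * P 0 j + xm i 1 * P 1 j + xm i 2 * P 2 j := by
      rw [Matrix.mul_apply, Fin.sum_univ_three]
    rw [hentry]
    have h1 : ∀ k : Fin 3, (xm i k * P k j).natAbs ≤ C * (3 * (C + 1)) ^ t.length := by
      intro k
      rw [Int.natAbs_mul]
      exact Nat.mul_le_mul (hx i k) (ht k j)
    calc (xm i 0 * P 0 j + xm i 1 * P 1 j + xm i 2 * P 2 j).natAbs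
        ≤ C * (3 * (C + 1)) ^ t.length + C * (3 * (C + 1)) ^ t.length
          + C * (3 * (C + 1)) ^ t.length :=
          le_trans (Int.natAbs_add_le _ _) (Nat.add_le_add (le_trans (Int.natAbs_add_le _ _)
            (Nat.add_le_add (h1 0) (h1 1))) (h1 2))
      _ ≤ (3 * (C + 1)) ^ (x :: t).length := by
          rw [List.length_cons, pow_succ]
          have heq : C * (3 * (C + 1)) ^ t.length + C * (3 * (C + 1)) ^ t.length
              + C * (3 * (C + 1)) ^ t.length = (3 * (C + 1)) ^ t.length * (3 * C) := by ring
          rw [heq]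
          exact Nat.mul_le_mul_left _ (by omega)

/- ### The hyperbolic element and explicit computations -/

def aMat : SL3 :=
  ⟨!![2, 1, 0; 1, 1, 0; 0, 0, 1], by rw [Matrix.det_fin_three]; rfl⟩

lemma sl3_inv_coe (g : SL3) (M : Matrix (Fin 3) (Fin 3) ℤ) (hdet : M.det = 1)
    (h : (g : Matrix (Fin 3) (Fin 3) ℤ) * M = 1) :
    ((g⁻¹ : SL3) : Matrix (Fin 3) (Fin 3) ℤ) = M := by
  obtain ⟨B, hBcoe⟩ : ∃ B : SL3, (B : Matrix (Fin 3) (Fin 3) ℤ) = M := ⟨⟨M, hdet⟩, rfl⟩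
  have hB : g * B = 1 := Subtype.ext (by
    rw [Matrix.SpecialLinearGroup.coe_mul, hBcoe]
    exact h)
  rw [inv_eq_of_mul_eq_one_right hB, hBcoe]

lemma aMat_pow (m : ℕ) : ∃ p q r : ℤ,
    ((aMat ^ m : SL3) : Matrix (Fin 3) (Fin 3) ℤ) = !![p, q, 0; q, r, 0; 0, 0, 1] ∧
    p = q + r ∧ p * r - q * q = 1 ∧ 0 ≤ q ∧ 2 ^ (m - 1) ≤ r ∧ (1 ≤ m → 2 ^ (m - 1) ≤ q) := by
  induction m with
  | zero =>
    refine ⟨1, 0, 1, ?_, by ring, by ring, le_refl _, by norm_num, by omega⟩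
    rw [pow_zero, Matrix.SpecialLinearGroup.coe_one, Matrix.one_fin_three]
  | succ m ih =>
    obtain ⟨p, q, r, hm, hp, hdet, hq0, hr, hq⟩ := ih
    have hone : (1 : ℤ) ≤ 2 ^ (m - 1) := one_le_pow₀ (by norm_num)
    have h2 : ∀ _ : 1 ≤ m, (2 : ℤ) ^ (m + 1 - 1) = 2 ^ (m - 1) + 2 ^ (m - 1) := by
      intro h1
      have hm1 : m - 1 + 1 = m := by omega
      calc (2 : ℤ) ^ (m + 1 - 1) = 2 ^ (m - 1 + 1) := by congr 1; omega
        _ = 2 ^ (m - 1) + 2 ^ (m - 1) := by rw [pow_succ]; ring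
    refine ⟨3 * q + 2 * r, 2 * q + r, q + r, ?_, by ring,
      by linear_combination hdet - r * hp, by linarith, ?_, fun _ => ?_⟩
    · have hmul : ((aMat ^ (m + 1) : SL3) : Matrix (Fin 3) (Fin 3) ℤ)
          = !![p, q, 0; q, r, 0; 0, 0, 1] * !![2, 1, 0; 1, 1, 0; 0, 0, 1] := by
        rw [pow_succ, Matrix.SpecialLinearGroup.coe_mul, hm]; rfl
      rw [hmul, Matrix.mul_fin_three]
      subst hp
      ext i j
      fin_cases i <;> fin_cases j <;> simp <;> ring
    · rcases Nat.eq_zero_or_pos m with h0 | h1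
      · subst h0; norm_num; linarith
      · rw [h2 h1]
        exact add_le_add (hq h1) hr
    · rcases Nat.eq_zero_or_pos m with h0 | h1
      · subst h0; norm_num; linarith
      · rw [h2 h1]
        have := hq h1
        linarith

lemma e12_zpow (k : ℤ) :
    ((e12 ^ k : SL3) : Matrix (Fin 3) (Fin 3) ℤ) = !![1, k, 0; 0, 1, 0; 0, 0, 1] := by
  have hinv : ((e12⁻¹ : SL3) : Matrix (Fin 3) (Fin 3) ℤ) = !![1, -1, 0; 0, 1, 0; 0, 0, 1] := by
    refine sl3_inv_coe e12 _ (by rw [Matrix.det_fin_three]; rfl) ?_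
    show (!![1, 1, 0; 0, 1, 0; 0, 0, 1] : Matrix (Fin 3) (Fin 3) ℤ) * _ = 1
    rw [Matrix.mul_fin_three, Matrix.one_fin_three]
    norm_num
  induction k using Int.induction_on with
  | zero => rw [zpow_zero, Matrix.SpecialLinearGroup.coe_one, Matrix.one_fin_three]
  | succ n ih =>
    rw [zpow_add_one, Matrix.SpecialLinearGroup.coe_mul, ih]
    show _ * (!![1, 1, 0; 0, 1, 0; 0, 0, 1] : Matrix (Fin 3) (Fin 3) ℤ) = _
    rw [Matrix.mul_fin_three]
    ext i j
    fin_cases i <;> fin_cases j <;> simp <;> try ring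
  | pred n ih =>
    rw [zpow_sub_one, Matrix.SpecialLinearGroup.coe_mul, ih, hinv, Matrix.mul_fin_three]
    ext i j
    fin_cases i <;> fin_cases j <;> simp <;> try ring

/-- For every nonzero integer `k`, the element `e₁₂^k` does not lie in the kernel of the
natural action of `SL(3,ℤ)` on any asymptotic cone; in particular this kernel is not a
finite-index subgroup of `SL(3,ℤ)`. -/
theorem e12_zpow_not_inConeKernel
    (S : Set SL3) (hSfin : S.Finite) (hSgen : Subgroup.closure S = ⊤)
    (ω : Ultrafilter ℕ) (hω : ∀ A ∈ ω, A.Infinite)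
    (d : ℕ → ℝ) (hd_pos : ∀ n, 0 < d n) (hd_mono : Monotone d)
    (hd_unbdd : ∀ B : ℝ, ∃ n, B < d n) :
    (∀ k : ℤ, k ≠ 0 →
      ∃ x : ℕ → SL3,
        (∃ B : ℝ, ∀ n, (wordLength S (x n) : ℝ) / d n ≤ B) ∧
        ¬ Tendsto (fun n => (wordLength S ((x n)⁻¹ * e12 ^ k * x n) : ℝ) / d n)
            (ω : Filter ℕ) (nhds 0)) ∧
    (∀ H : Subgroup SL3, (H : Set SL3) = {g | inConeKernel S ω d g} → ¬ H.FiniteIndex) := by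
  obtain ⟨K, hK2, hKbound⟩ := entries_bound S hSfin
  have hKpos : (0 : ℝ) < K := by positivity
  set L : ℕ := wordLength S aMat with hL
  set m : ℕ → ℕ := fun n => ⌈d n⌉₊ + 2 with hmdef
  set x : ℕ → SL3 := fun n => aMat ^ (m n) with hxdef
  have part1 : ∀ k : ℤ, k ≠ 0 →
      ∃ x : ℕ → SL3,
        (∃ B : ℝ, ∀ n, (wordLength S (x n) : ℝ) / d n ≤ B) ∧
        ¬ Tendsto (fun n => (wordLength S ((x n)⁻¹ * e12 ^ k * x n) : ℝ) / d n)
            (ω : Filter ℕ) (nhds 0) := by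
    intro k hk
    refine ⟨x, ⟨(L : ℝ) + 3 * L / d 0, ?_⟩, ?_⟩
    · -- boundedness of ‖x n‖/d n
      intro n
      have hw : (wordLength S (x n) : ℝ) ≤ (m n : ℝ) * L := by
        exact_mod_cast wordLength_pow_le hSgen aMat (m n)
      have hmn : (m n : ℝ) ≤ d n + 3 := by
        have hceil : (⌈d n⌉₊ : ℝ) < d n + 1 := Nat.ceil_lt_add_one (le_of_lt (hd_pos n))
        have : (m n : ℝ) = (⌈d n⌉₊ : ℝ) + 2 := by push_cast [hmdef]; ring
        linarith
      have hd0 : d 0 ≤ d n := hd_mono (Nat.zero_le n)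
      have hL0 : (0 : ℝ) ≤ (L : ℝ) := Nat.cast_nonneg L
      have hdn := hd_pos n
      have hd00 := hd_pos 0
      have hnum : (wordLength S (x n) : ℝ) ≤ (d n + 3) * L :=
        hw.trans (mul_le_mul_of_nonneg_right hmn hL0)
      calc (wordLength S (x n) : ℝ) / d n ≤ ((d n + 3) * L) / d n := by gcongr
        _ = (L : ℝ) + 3 * L / d n := by
            field_simp
        _ ≤ (L : ℝ) + 3 * L / d 0 := by gcongr
    · -- the conjugates are long
      intro hT
      have hfull : ∀ n, (1 : ℝ) / K ≤ (wordLength S ((x n)⁻¹ * e12 ^ k * x n) : ℝ) / d n := by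
        intro n
        set y : SL3 := (x n)⁻¹ * e12 ^ k * x n with hydef
        obtain ⟨p, q, r, hmcoe, hp, hdet, hq0, hr, hq⟩ := aMat_pow (m n)
        have hm1 : 1 ≤ m n := by simp only [hmdef]; omega
        have hqlow : (2 : ℤ) ^ (m n - 1) ≤ q := hq hm1
        have htwo : (2 : ℤ) ≤ 2 ^ (m n - 1) := by
          calc (2 : ℤ) = 2 ^ 1 := by norm_num
            _ ≤ 2 ^ (m n - 1) := pow_le_pow_right₀ (by norm_num) (by simp only [hmdef]; omega)
        -- inverse of aMat ^ (m n)
        have hinvcoe : (((aMat ^ (m n))⁻¹ : SL3) : Matrix (Fin 3) (Fin 3) ℤ)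
            = !![r, -q, 0; -q, p, 0; 0, 0, 1] := by
          refine sl3_inv_coe _ _ ?_ ?_
          · rw [Matrix.det_fin_three]
            simp [Matrix.vecHead, Matrix.vecTail]
            linarith [hdet]
          · rw [hmcoe, Matrix.mul_fin_three, Matrix.one_fin_three]
            ext i j
            fin_cases i <;> fin_cases j <;>
              simp [Matrix.vecHead, Matrix.vecTail] <;>
              linarith [hdet]
        -- the (0,0) entry of the conjugate
        have hycoe : (y : Matrix (Fin 3) (Fin 3) ℤ)
            = !![r, -q, 0; -q, p, 0; 0, 0, 1] * !![1, k, 0; 0, 1, 0; 0, 0, 1]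
              * !![p, q, 0; q, r, 0; 0, 0, 1] := by
          rw [hydef, Matrix.SpecialLinearGroup.coe_mul, Matrix.SpecialLinearGroup.coe_mul,
            e12_zpow, hxdef, hinvcoe, hmcoe]
        have hy00 : (y : Matrix (Fin 3) (Fin 3) ℤ) 0 0 = 1 + k * (q * r) := by
          rw [hycoe, Matrix.mul_fin_three, Matrix.mul_fin_three]
          simp
          linear_combination hdet
        -- lower bound on the entry
        have hylow : 2 ^ (m n - 1) ≤ ((y : Matrix (Fin 3) (Fin 3) ℤ) 0 0).natAbs := by
          have habs : (2 : ℤ) ^ (m n - 1) ≤ |1 + k * (q * r)| := by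
            set t : ℤ := 2 ^ (m n - 1) with htdef
            have ht0 : (0 : ℤ) ≤ t := by positivity
            have htt : t * 2 ≤ t * t := mul_le_mul_of_nonneg_left htwo ht0
            have hqr : t * t ≤ q * r := mul_le_mul hqlow hr (by linarith) (by linarith)
            have hqrnn : (0 : ℤ) ≤ q * r := by nlinarith
            rcases lt_or_gt_of_ne hk with hneg | hpos
            · have hk1 : k ≤ -1 := by omega
              have hkq : k * (q * r) ≤ -1 * (q * r) := mul_le_mul_of_nonneg_right hk1 hqrnn
              rw [abs_of_nonpos (by linarith)]
              linarith
            · have hk1 : 1 ≤ k := hpos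
              have hkq : 1 * (q * r) ≤ k * (q * r) := mul_le_mul_of_nonneg_right hk1 hqrnn
              rw [abs_of_nonneg (by linarith)]
              linarith
          rw [hy00]
          have := habs.trans_eq (Int.abs_eq_natAbs _)
          exact_mod_cast this
        -- upper bound via word length
        obtain ⟨l, hl, hlen, hprodl⟩ := wordLength_exists hSgen y
        have hup : ((y : Matrix (Fin 3) (Fin 3) ℤ) 0 0).natAbs ≤ K ^ wordLength S y := by
          have := hKbound l hl 0 0
          rwa [hprodl, hlen] at this
        have hKle : K ^ wordLength S y ≤ 2 ^ (K * wordLength S y) := by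
          calc K ^ wordLength S y ≤ (2 ^ K) ^ wordLength S y :=
                Nat.pow_le_pow_left (Nat.lt_two_pow_self (n := K)).le _
            _ = 2 ^ (K * wordLength S y) := by rw [← pow_mul]
        have hexp : m n - 1 ≤ K * wordLength S y :=
          (Nat.pow_le_pow_iff_right one_lt_two).mp ((hylow.trans hup).trans hKle)
        -- pass to the reals
        have hdle : d n ≤ ((m n - 1 : ℕ) : ℝ) := by
          have h1 : d n ≤ (⌈d n⌉₊ : ℝ) := Nat.le_ceil _
          have h2 : ((m n - 1 : ℕ) : ℝ) = (⌈d n⌉₊ : ℝ) + 1 := by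
            have : m n - 1 = ⌈d n⌉₊ + 1 := by simp only [hmdef]; omega
            rw [this]; push_cast; ring
          linarith
        have hdle2 : d n ≤ (K : ℝ) * (wordLength S y : ℝ) := by
          have : ((m n - 1 : ℕ) : ℝ) ≤ (K : ℝ) * (wordLength S y : ℝ) := by
            exact_mod_cast hexp
          linarith
        rw [div_le_div_iff₀ hKpos (hd_pos n)]
        calc 1 * d n = d n := one_mul _
          _ ≤ (K : ℝ) * (wordLength S y : ℝ) := hdle2
          _ = (wordLength S y : ℝ) * K := by ring
      have hmem : {n | (wordLength S ((x n)⁻¹ * e12 ^ k * x n) : ℝ) / d n < 1 / K}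
          ∈ (ω : Filter ℕ) := hT (Iio_mem_nhds (by positivity))
      obtain ⟨n, hn⟩ := Filter.nonempty_of_mem hmem
      exact absurd (hfull n) (not_le.mpr hn)
  refine ⟨part1, ?_⟩
  intro H hset hFI
  obtain ⟨t, ht0, _, htH⟩ := Subgroup.exists_pow_mem_of_index_ne_zero hFI.index_ne_zero e12
  have hk : ((t : ℤ)) ≠ 0 := Int.natCast_ne_zero.mpr (by omega)
  obtain ⟨x', hB, hnot⟩ := part1 (t : ℤ) hk
  have hker : inConeKernel S ω d (e12 ^ (t : ℤ)) := by
    have hmemH : e12 ^ (t : ℤ) ∈ H := by rw [zpow_natCast]; exact htH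
    have : e12 ^ (t : ℤ) ∈ (H : Set SL3) := hmemH
    rw [hset] at this
    exact this
  exact hnot (hker x' hB)
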